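/- An open Euclidean disk that is tangent to the unit circle from inside, or that intersects the unit disk but is not contained in it, contains hyperbolic disks (with respect to the Poincaré disk metric) of every radius r > 0. -/

import Mathlib

noncomputable def distH (u v : EuclideanSpace ℝ (Fin 2)) : ℝ :=
  2 * Real.arsinh (‖u - v‖ / Real.sqrt ((1 - ‖u‖ ^ 2) * (1 - ‖v‖ ^ 2)))

/-- The open hyperbolic disk with centre `u` and radius `r` in the Poincaré disk model. -/
def ballH (u : EuclideanSpace ℝ (Fin 2)) (r : ℝ) : Set (EuclideanSpace ℝ (Fin 2)) :=
  {v | ‖v‖ < 1 ∧ distH u v < r}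

lemma ballH_sq_bound {u v : EuclideanSpace ℝ (Fin 2)} {r : ℝ}
    (hu : ‖u‖ < 1) (hv : ‖v‖ < 1) (h : distH u v < r) :
    ‖u - v‖ ^ 2 < Real.sinh (r/2) ^ 2 * ((1 - ‖u‖ ^ 2) * (1 - ‖v‖ ^ 2)) := by
  have hA : 0 < 1 - ‖u‖ ^ 2 := by nlinarith [norm_nonneg u]
  have hB : 0 < 1 - ‖v‖ ^ 2 := by nlinarith [norm_nonneg v]
  have hs : 0 < Real.sqrt ((1 - ‖u‖ ^ 2) * (1 - ‖v‖ ^ 2)) := Real.sqrt_pos.2 (by positivity)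
  have h1 : Real.arsinh (‖u - v‖ / Real.sqrt ((1 - ‖u‖ ^ 2) * (1 - ‖v‖ ^ 2))) < r / 2 := by
    unfold distH at h; linarith
  have h2 : ‖u - v‖ / Real.sqrt ((1 - ‖u‖ ^ 2) * (1 - ‖v‖ ^ 2)) < Real.sinh (r/2) := by
    calc ‖u - v‖ / Real.sqrt ((1 - ‖u‖ ^ 2) * (1 - ‖v‖ ^ 2))
        = Real.sinh (Real.arsinh (‖u - v‖ / Real.sqrt ((1 - ‖u‖ ^ 2) * (1 - ‖v‖ ^ 2)))) :=
          (Real.sinh_arsinh _).symm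
      _ < _ := Real.sinh_lt_sinh.2 h1
  have h3 : ‖u - v‖ < Real.sinh (r/2) * Real.sqrt ((1 - ‖u‖ ^ 2) * (1 - ‖v‖ ^ 2)) :=
    (div_lt_iff₀ hs).1 h2
  have h4 := Real.sq_sqrt (mul_nonneg hA.le hB.le)
  nlinarith [norm_nonneg (u - v), hs, h3]

lemma arithA (K m a ρ x w nv : ℝ)
    (hK : 0 < K) (hm : 0 < m) (hm2 : m ≤ 1/2) (hm8 : m ≤ 1/(8*K^2))
    (ha : 0 < a) (ha2 : a ≤ 1/2) (ha' : a * (4*K^2*m+2) ≤ ρ*m) (hρ : 0 < ρ)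
    (hnv0 : 0 ≤ nv) (hnv1 : nv < 1)
    (hx0 : 0 ≤ x) (hx2 : x^2 < K^2 * ((1-(1-a)^2) * (1 - nv^2)))
    (hnvb : nv ≤ 1 - a + x) (hw0 : 0 ≤ w) (hwb : w ≤ x + a) :
    (1-ρ) * w^2 < ρ * (1 - nv^2) := by
  have hB : 0 < 1 - nv^2 := by nlinarith
  set B := 1 - nv^2 with hBdef
  clear_value B
  have hx2' : x ^ 2 < K ^ 2 * (2*a) * B := by
    have h0 : 0 ≤ K^2 * a^2 * B := by positivity
    nlinarith
  have hBlow : m * a ≤ B := by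
    by_cases hc : x ≤ a/2
    · have h1 : 0 ≤ nv * (1 - nv) := mul_nonneg hnv0 (by linarith)
      have h2 : m*a ≤ (1/2)*a := mul_le_mul_of_nonneg_right hm2 ha.le
      nlinarith
    · push_neg at hc
      have hm8' : m * (8*K^2) ≤ 1 := by
        rw [← le_div_iff₀ (by positivity)]; exact hm8
      by_contra hcon
      push_neg at hcon
      have hx0' : 0 < x := lt_of_le_of_lt (by linarith) hc
      have hxx1 : x*(a/2) < x*x := mul_lt_mul_of_pos_left hc hx0'
      have hxx2 : (a/2)*(a/2) < x*(a/2) := mul_lt_mul_of_pos_right hc (by positivity)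
      have hint1 : (2*K^2*a)*B < (2*K^2*a)*(m*a) :=
        mul_lt_mul_of_pos_left hcon (by positivity)
      have hint2 : m*(8*K^2)*a^2 ≤ 1*a^2 :=
        mul_le_mul_of_nonneg_right hm8' (sq_nonneg a)
      nlinarith
  have h1 : w ^ 2 ≤ (x + a) ^ 2 := by nlinarith
  have h2 : m * (x+a)^2 < ρ * m * B := by
    have P1 : m*x^2 < m*(K^2*(2*a)*B) := mul_lt_mul_of_pos_left hx2' hm
    have P2 : a*(m*a) ≤ a*B := mul_le_mul_of_nonneg_left hBlow ha.le
    have P3 : (a*(4*K^2*m+2))*B ≤ (ρ*m)*B := mul_le_mul_of_nonneg_right ha' hB.le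
    have P4 : 0 ≤ m*(x-a)^2 := mul_nonneg hm.le (sq_nonneg _)
    nlinarith
  have h3 : w^2 < ρ * B := by
    have h4 : m*w^2 ≤ m*(x+a)^2 := mul_le_mul_of_nonneg_left h1 hm.le
    have h5 : m * w^2 < m * (ρ*B) := by linarith
    exact (mul_lt_mul_iff_right₀ hm).1 h5
  have h6 : 0 ≤ ρ * w^2 := by positivity
  linarith

lemma arithB (ρ nv I : ℝ) (h5 : (1-ρ)*(nv^2 - 2*I + 1) < ρ*(1 - nv^2)) :
    nv^2 - 2*(1-ρ)*I + (1-ρ)^2 < ρ^2 := by nlinarith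

lemma tangent_aux (p : EuclideanSpace ℝ (Fin 2)) (hp : ‖p‖ = 1) (ρ : ℝ) (hρ : 0 < ρ)
    (r : ℝ) (hr : 0 < r) :
    ∃ u : EuclideanSpace ℝ (Fin 2), ‖u‖ < 1 ∧
      ballH u r ⊆ Metric.ball ((1 - ρ) • p) ρ := by
  set K := Real.sinh (r/2) with hKdef
  have hK : 0 < K := Real.sinh_pos_iff.2 (by linarith)
  set m : ℝ := min (1/2) (1/(8*K^2)) with hmdef
  have hm : 0 < m := lt_min (by norm_num) (by positivity)
  have hm2 : m ≤ 1/2 := min_le_left _ _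
  have hm8 : m ≤ 1/(8*K^2) := min_le_right _ _
  set a : ℝ := min (1/2) (ρ*m/(4*K^2*m+2)) with hadef
  have ha : 0 < a := lt_min (by norm_num) (by positivity)
  have ha2 : a ≤ 1/2 := min_le_left _ _
  have ha' : a * (4*K^2*m+2) ≤ ρ*m := by
    rw [← le_div_iff₀ (by positivity)]; exact min_le_right _ _
  clear_value K m a
  have hnu : ‖(1-a) • p‖ = 1 - a := by
    rw [norm_smul, hp, mul_one, Real.norm_eq_abs, abs_of_pos (by linarith)]
  have hu1 : ‖(1-a) • p‖ < 1 := by rw [hnu]; linarith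
  refine ⟨(1-a) • p, hu1, ?_⟩
  rintro v ⟨hv1, hv2⟩
  have hx2 : ‖(1-a) • p - v‖ ^ 2 < K ^ 2 * ((1-(1-a)^2) * (1 - ‖v‖ ^ 2)) := by
    rw [hKdef]
    have := ballH_sq_bound hu1 hv1 hv2
    rwa [hnu] at this
  have hnvb : ‖v‖ ≤ 1 - a + ‖(1-a) • p - v‖ := by
    have h := abs_le.1 (abs_norm_sub_norm_le ((1-a)•p) v)
    rw [hnu] at h
    linarith [h.1, h.2]
  have hup : ‖(1-a)•p - p‖ = a := by
    have h0 : (1-a)•p - p = -(a • p) := by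
      rw [sub_smul, one_smul, sub_sub_cancel_left]
    rw [h0, norm_neg, norm_smul, hp, mul_one, Real.norm_eq_abs, abs_of_pos ha]
  have hwb : ‖v - p‖ ≤ ‖(1-a) • p - v‖ + a := by
    calc ‖v - p‖ = ‖(v - (1-a)•p) + ((1-a)•p - p)‖ := by rw [sub_add_sub_cancel]
      _ ≤ ‖v - (1-a)•p‖ + ‖(1-a)•p - p‖ := norm_add_le _ _
      _ = ‖(1-a) • p - v‖ + a := by rw [norm_sub_rev, hup]
  have hkey : (1-ρ) * ‖v - p‖^2 < ρ * (1 - ‖v‖^2) :=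
    arithA K m a ρ ‖(1-a) • p - v‖ ‖v - p‖ ‖v‖ hK hm hm2 hm8 ha ha2 ha' hρ
      (norm_nonneg v) hv1 (norm_nonneg _) hx2 hnvb (norm_nonneg _) hwb
  have hid2 : ‖v - p‖ ^ 2 = ‖v‖^2 - 2*(inner ℝ v p : ℝ) + 1 := by
    rw [norm_sub_sq_real, hp]; ring
  have hid1 : ‖v - (1-ρ)•p‖ ^ 2
      = ‖v‖^2 - 2*(1-ρ)*(inner ℝ v p : ℝ) + (1-ρ)^2 := by
    rw [norm_sub_sq_real, real_inner_smul_right, norm_smul, hp]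
    simp [Real.norm_eq_abs, sq_abs]
    ring
  rw [Metric.mem_ball, dist_eq_norm]
  have hsq : ‖v - (1-ρ)•p‖ ^ 2 < ρ ^ 2 := by
    rw [hid1]
    refine arithB ρ ‖v‖ (inner ℝ v p : ℝ) ?_
    rw [← hid2]; exact hkey
  exact lt_of_pow_lt_pow_left₀ 2 hρ.le hsq

lemma arithC (K t δ x nv : ℝ) (hK : 0 < K) (ht : 0 < t) (ht2 : t ≤ 1/2)
    (htK : t ≤ δ^2/(8*K^2+1)) (hδ : 0 < δ) (hnv0 : 0 ≤ nv) (hnv1 : nv < 1)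
    (hx0 : 0 ≤ x) (hx2 : x^2 < K^2*((1-(1-t)^2)*(1-nv^2))) : x < δ/2 := by
  have h1 : (1-(1-t)^2)*(1-nv^2) ≤ 2*t := by
    nlinarith [sq_nonneg (t*nv), mul_nonneg ht.le (sq_nonneg nv), sq_nonneg t]
  have h2 : x^2 < K^2 * (2*t) :=
    lt_of_lt_of_le hx2 (mul_le_mul_of_nonneg_left h1 (sq_nonneg K))
  have htK' : t*(8*K^2+1) ≤ δ^2 := by
    rw [← le_div_iff₀ (by positivity)]; exact htK
  have h3 : K^2*(2*t) ≤ (δ/2)^2 := by nlinarith [mul_nonneg (sq_nonneg K) ht.le]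
  exact lt_of_pow_lt_pow_left₀ 2 (by positivity) (by linarith)

lemma cross_aux (c p : EuclideanSpace ℝ (Fin 2)) (ρ : ℝ) (hρ : 0 < ρ) (hp : ‖p‖ = 1)
    (hpc : dist p c < ρ) (r : ℝ) (hr : 0 < r) :
    ∃ u : EuclideanSpace ℝ (Fin 2), ‖u‖ < 1 ∧ ballH u r ⊆ Metric.ball c ρ := by
  set K := Real.sinh (r/2) with hKdef
  have hK : 0 < K := Real.sinh_pos_iff.2 (by linarith)
  set δ := ρ - dist p c with hδdef
  have hδ : 0 < δ := by simp only [hδdef]; linarith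
  set t : ℝ := min (1/2) (min (δ/2) (δ^2/(8*K^2+1))) with htdef
  have ht : 0 < t := lt_min (by norm_num) (lt_min (by positivity) (by positivity))
  have ht2 : t ≤ 1/2 := min_le_left _ _
  have htδ : t ≤ δ/2 := le_trans (min_le_right _ _) (min_le_left _ _)
  have htK : t ≤ δ^2/(8*K^2+1) := le_trans (min_le_right _ _) (min_le_right _ _)
  clear_value K t δ
  have hnu : ‖(1-t) • p‖ = 1 - t := by
    rw [norm_smul, hp, mul_one, Real.norm_eq_abs, abs_of_pos (by linarith)]
  have hu1 : ‖(1-t) • p‖ < 1 := by rw [hnu]; linarith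
  refine ⟨(1-t) • p, hu1, ?_⟩
  rintro v ⟨hv1, hv2⟩
  have hx2 : ‖(1-t) • p - v‖ ^ 2 < K ^ 2 * ((1-(1-t)^2) * (1 - ‖v‖ ^ 2)) := by
    rw [hKdef]
    have := ballH_sq_bound hu1 hv1 hv2
    rwa [hnu] at this
  have hxlt : ‖(1-t) • p - v‖ < δ/2 :=
    arithC K t δ _ ‖v‖ hK ht ht2 htK hδ (norm_nonneg v) hv1 (norm_nonneg _) hx2
  have hup : dist ((1-t)•p) p = t := by
    rw [dist_eq_norm]
    have h0 : (1-t)•p - p = -(t • p) := by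
      rw [sub_smul, one_smul, sub_sub_cancel_left]
    rw [h0, norm_neg, norm_smul, hp, mul_one, Real.norm_eq_abs, abs_of_pos ht]
  rw [Metric.mem_ball]
  have htri : dist v c ≤ dist v ((1-t)•p) + dist ((1-t)•p) p + dist p c :=
    dist_triangle4 v ((1-t)•p) p c
  have hvu : dist v ((1-t)•p) = ‖(1-t) • p - v‖ := by
    rw [dist_eq_norm, norm_sub_rev]
  rw [hvu, hup] at htri
  have : δ = ρ - dist p c := hδdef
  linarith

theorem stmt4 (c : EuclideanSpace ℝ (Fin 2)) (ρ : ℝ) (hρ : 0 < ρ)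
    (h : (Metric.ball c ρ ⊆ Metric.ball (0 : EuclideanSpace ℝ (Fin 2)) 1 ∧
            ∃! p : EuclideanSpace ℝ (Fin 2), p ∈ closure (Metric.ball c ρ) ∧ ‖p‖ = 1) ∨
         ((Metric.ball c ρ ∩ Metric.ball (0 : EuclideanSpace ℝ (Fin 2)) 1).Nonempty ∧
            ¬ Metric.ball c ρ ⊆ Metric.closedBall (0 : EuclideanSpace ℝ (Fin 2)) 1)) :
    ∀ r : ℝ, 0 < r → ∃ u : EuclideanSpace ℝ (Fin 2), ‖u‖ < 1 ∧
      ballH u r ⊆ Metric.ball c ρ := by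
  intro r hr
  rcases h with ⟨h1, p, ⟨hpcl, hpn⟩, -⟩ | ⟨⟨w, hw1, hw2⟩, hns⟩
  · -- tangent case
    have e1 : closure (Metric.ball c ρ) = Metric.closedBall c ρ := closure_ball c hρ.ne'
    have hcl : Metric.closedBall c ρ ⊆ Metric.closedBall (0 : EuclideanSpace ℝ (Fin 2)) 1 := by
      rw [← e1]
      exact (closure_mono h1).trans (by rw [closure_ball (0 : EuclideanSpace ℝ (Fin 2)) one_ne_zero])
    have hpc : dist p c ≤ ρ := by rw [e1] at hpcl; exact hpcl
    by_cases hc0 : c = 0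
    · subst hc0
      have hd : dist p 0 = 1 := by rw [dist_zero_right, hpn]
      have h1ρ : 1 ≤ ρ := hd ▸ hpc
      have hρ1 : ρ ≤ 1 := by
        have hq : (ρ • p) ∈ Metric.closedBall (0 : EuclideanSpace ℝ (Fin 2)) ρ := by
          rw [Metric.mem_closedBall, dist_zero_right, norm_smul, hpn, mul_one,
            Real.norm_eq_abs, abs_of_pos hρ]
        have := hcl hq
        rwa [Metric.mem_closedBall, dist_zero_right, norm_smul, hpn, mul_one,
          Real.norm_eq_abs, abs_of_pos hρ] at this
      have hρeq : ρ = 1 := le_antisymm hρ1 h1ρ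
      obtain ⟨u, hu, hsub⟩ := tangent_aux p hpn 1 one_pos r hr
      refine ⟨u, hu, ?_⟩
      rw [hρeq]
      simpa using hsub
    · -- c ≠ 0 : show c = (1-ρ) • p
      have hcpos : 0 < ‖c‖ := norm_pos_iff.2 hc0
      have hcub : ‖c‖ + ρ ≤ 1 := by
        have hq : c + ρ • (‖c‖⁻¹ • c) ∈ Metric.closedBall c ρ := by
          rw [Metric.mem_closedBall, dist_eq_norm]
          have : c + ρ • (‖c‖⁻¹ • c) - c = ρ • (‖c‖⁻¹ • c) := by abel
          rw [this, norm_smul, norm_smul, Real.norm_eq_abs, abs_of_pos hρ,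
            Real.norm_eq_abs, abs_of_pos (by positivity), inv_mul_cancel₀ hcpos.ne',
            mul_one]
        have := hcl hq
        rw [Metric.mem_closedBall, dist_zero_right] at this
        have hn : ‖c + ρ • (‖c‖⁻¹ • c)‖ = ‖c‖ + ρ := by
          have e2 : c + ρ • (‖c‖⁻¹ • c) = (1 + ρ * ‖c‖⁻¹) • c := by
            rw [add_smul, one_smul, smul_smul]
          rw [e2, norm_smul, Real.norm_eq_abs, abs_of_pos (by positivity)]
          field_simp
        rwa [hn] at this
      have hclb : 1 - ρ ≤ ‖c‖ := by
        have := norm_sub_norm_le p c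
        rw [hpn, ← dist_eq_norm] at this
        linarith
      have hceq : ‖c‖ = 1 - ρ := by linarith
      have hdeq : dist p c = ρ := by
        have := norm_sub_norm_le p c
        rw [hpn, hceq, ← dist_eq_norm] at this
        linarith
      have hpceq : ‖p - c‖ = ρ := by rw [← dist_eq_norm]; exact hdeq
      have hinner : (inner ℝ c (p - c) : ℝ) = ‖c‖ * ‖p - c‖ := by
        have hid : ‖c + (p - c)‖ ^ 2 = ‖c‖^2 + 2 * (inner ℝ c (p-c) : ℝ) + ‖p - c‖^2 :=
          norm_add_sq_real c (p - c)
        rw [add_sub_cancel, hpn, hceq, hpceq] at hid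
        rw [hceq, hpceq]
        nlinarith
      have hsr : ‖p - c‖ • c = ‖c‖ • (p - c) := inner_eq_norm_mul_iff_real.1 hinner
      rw [hpceq, hceq] at hsr
      have hcp : c = (1 - ρ) • p := by
        have h2 : c = ρ • c + (1-ρ) • c := by
          rw [← add_smul]; norm_num
        rw [h2, hsr, smul_sub]
        abel
      obtain ⟨u, hu, hsub⟩ := tangent_aux p hpn ρ hρ r hr
      exact ⟨u, hu, by rwa [← hcp] at hsub⟩
  · -- crossing case
    rw [Set.not_subset] at hns
    obtain ⟨q, hq1, hq2⟩ := hns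
    rw [Metric.mem_closedBall, dist_zero_right, not_le] at hq2
    rw [Metric.mem_ball, dist_zero_right] at hw2
    have hcont : Continuous (fun s : ℝ => ‖w + s • (q - w)‖) :=
      (continuous_const.add (continuous_id.smul continuous_const)).norm
    have hiv := intermediate_value_Icc (le_of_lt one_pos) hcont.continuousOn
    have h1m : (1:ℝ) ∈ Set.Icc ‖w + (0:ℝ) • (q - w)‖ ‖w + (1:ℝ) • (q - w)‖ := by
      constructor
      · simpa using hw2.le
      · simp only [one_smul, add_sub_cancel]
        exact hq2.le
    obtain ⟨s, hs, hfs⟩ := hiv h1m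
    set p := w + s • (q - w) with hpdef
    have hpn : ‖p‖ = 1 := hfs
    have hpseg : p ∈ segment ℝ w q := by
      rw [segment_eq_image']
      exact ⟨s, hs, rfl⟩
    have hpball : p ∈ Metric.ball c ρ :=
      (convex_ball c ρ).segment_subset hw1 hq1 hpseg
    exact cross_aux c p ρ hρ hpn (Metric.mem_ball.1 hpball) r hr
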